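/- Let f ∈ S_{n,d} with T_f as defined. Then f is totally tangentially unstable (T_f ⊆ ℂf) if and only if the germ at f of the projectivized orbit ℙ(G·f) contains no germ of a projective linear subspace through f of positive dimension. -/

import Mathlib

open MvPolynomial

/-- The action of `GL(n+1, ℂ)` on polynomials by linear coordinate change. -/
noncomputable def substGL (n : ℕ) (A : GL (Fin (n + 1)) ℂ)
    (f : MvPolynomial (Fin (n + 1)) ℂ) : MvPolynomial (Fin (n + 1)) ℂ :=
  aeval (fun i => ∑ j, (A : Matrix (Fin (n + 1)) (Fin (n + 1)) ℂ) i j • X j) f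

/-- `g ≅ f` : `g` lies in the `GL(n+1,ℂ)`-orbit of `f`. -/
def ProjEquiv (n : ℕ) (g f : MvPolynomial (Fin (n + 1)) ℂ) : Prop :=
  ∃ A : GL (Fin (n + 1)) ℂ, g = substGL n A f

/-- Evaluating a homogeneous polynomial at scaled variables multiplies it by `a ^ d`. -/
lemma aeval_smul_X_of_isHomogeneous {N : ℕ} (a : ℂ) {d : ℕ} {f : MvPolynomial (Fin N) ℂ}
    (hf : f.IsHomogeneous d) :
    aeval (fun i => a • X i : Fin N → MvPolynomial (Fin N) ℂ) f = a ^ d • f := by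
  conv_lhs => rw [f.as_sum]
  conv_rhs => rw [f.as_sum]
  rw [map_sum, Finset.smul_sum]
  refine Finset.sum_congr rfl fun m hm => ?_
  have hdeg : (∑ i ∈ m.support, m i) = d := by
    by_contra hne
    exact mem_support_iff.mp hm (hf.coeff_eq_zero hne)
  rw [aeval_monomial, monomial_eq]
  have hp : (m.prod fun i e => (a • X i : MvPolynomial (Fin N) ℂ) ^ e)
      = C (a ^ d) * m.prod fun i e => (X i : MvPolynomial (Fin N) ℂ) ^ e := by
    rw [Finsupp.prod, Finsupp.prod]
    calc ∏ i ∈ m.support, (a • X i : MvPolynomial (Fin N) ℂ) ^ m i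
        = ∏ i ∈ m.support, (C (a ^ m i) * (X i : MvPolynomial (Fin N) ℂ) ^ m i) := by
          refine Finset.prod_congr rfl fun i _ => ?_
          rw [smul_pow, smul_eq_C_mul]
      _ = (∏ i ∈ m.support, C (a ^ m i)) * ∏ i ∈ m.support, (X i : MvPolynomial (Fin N) ℂ) ^ m i :=
          Finset.prod_mul_distrib
      _ = C (a ^ d) * ∏ i ∈ m.support, (X i : MvPolynomial (Fin N) ℂ) ^ m i := by
          rw [← map_prod, Finset.prod_pow_eq_pow_sum, hdeg]
  rw [hp, smul_eq_C_mul, algebraMap_eq]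
  ring

/-- A nonzero scalar multiple of a homogeneous form of positive degree lies in its orbit. -/
lemma projEquiv_smul (n d : ℕ) (hd : d ≠ 0) {f : MvPolynomial (Fin (n + 1)) ℂ}
    (hf : f.IsHomogeneous d) {c : ℂ} (hc : c ≠ 0) : ProjEquiv n (c • f) f := by
  obtain ⟨a, ha⟩ := IsAlgClosed.exists_pow_nat_eq c (Nat.pos_of_ne_zero hd)
  have ha0 : a ≠ 0 := by
    rintro rfl
    rw [zero_pow hd] at ha
    exact hc ha.symm
  refine ⟨⟨algebraMap ℂ _ a, algebraMap ℂ _ a⁻¹, ?_, ?_⟩, ?_⟩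
  · rw [← map_mul, mul_inv_cancel₀ ha0, map_one]
  · rw [← map_mul, inv_mul_cancel₀ ha0, map_one]
  · have hfun : (fun i => ∑ j, (algebraMap ℂ (Matrix (Fin (n + 1)) (Fin (n + 1)) ℂ) a) i j • X j)
        = fun i => a • (X i : MvPolynomial (Fin (n + 1)) ℂ) := by
      funext i
      simp [Matrix.algebraMap_matrix_apply, ite_smul]
    rw [substGL]
    simp only [hfun]
    rw [aeval_smul_X_of_isHomogeneous a hf, ha]

/-- Composition law for the coordinate-change action. -/
lemma substGL_comp (n : ℕ) (A B : GL (Fin (n + 1)) ℂ) (f : MvPolynomial (Fin (n + 1)) ℂ) :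
    substGL n A (substGL n B f) = substGL n (B * A) f := by
  rw [substGL, substGL, substGL, ← AlgHom.comp_apply, comp_aeval]
  have hfun : (fun i => (aeval fun i => ∑ j, ((A : Matrix (Fin (n + 1)) (Fin (n + 1)) ℂ)) i j • (X j : MvPolynomial (Fin (n + 1)) ℂ))
        (∑ j, ((B : Matrix (Fin (n + 1)) (Fin (n + 1)) ℂ)) i j • (X j : MvPolynomial (Fin (n + 1)) ℂ)))
      = fun i => ∑ j, ((((B * A) : GL (Fin (n + 1)) ℂ) : Matrix (Fin (n + 1)) (Fin (n + 1)) ℂ)) i j • (X j : MvPolynomial (Fin (n + 1)) ℂ) := by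
    funext i
    simp only [map_sum, map_smul, aeval_X, Units.val_mul, Matrix.mul_apply, Finset.sum_smul,
      Finset.smul_sum, smul_smul]
    rw [Finset.sum_comm]
  rw [hfun]

lemma substGL_smul (n : ℕ) (A : GL (Fin (n + 1)) ℂ) (c : ℂ) (f : MvPolynomial (Fin (n + 1)) ℂ) :
    substGL n A (c • f) = c • substGL n A f := by
  rw [substGL, substGL, map_smul]

/-- `f` is totally tangentially unstable (`T_f ⊆ ℂf`) iff the
germ at `f` of the projectivized orbit `ℙ(G·f)` contains no germ of a
projective linear subspace through `f` of positive dimension. A projective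
linear subspace through `f` of positive dimension is `ℙ(V)` for a linear
subspace `V` with `f ∈ V` and `rank V ≥ 2`; its germ at `f` lies in the orbit
germ iff each line `t ↦ f + t•v` (`v ∈ V`) stays in the orbit for small `t`. -/
theorem totally_tangentially_unstable_iff_no_linear_germ (n d : ℕ)
    (f : MvPolynomial (Fin (n + 1)) ℂ) (hf : f.IsHomogeneous d) :
    (∀ h : MvPolynomial (Fin (n + 1)) ℂ,
        (∃ ε > (0 : ℝ), ∀ t : ℂ, ‖t‖ < ε → ProjEquiv n (f + t • h) f) →
        ∃ c : ℂ, h = c • f) ↔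
    ¬∃ V : Submodule ℂ (MvPolynomial (Fin (n + 1)) ℂ),
        f ∈ V ∧ 2 ≤ Module.rank ℂ V ∧
        ∀ v ∈ V, ∃ ε > (0 : ℝ), ∀ t : ℂ, ‖t‖ < ε → ProjEquiv n (f + t • v) f := by
  constructor
  · rintro hT ⟨V, hfV, hrank, hlines⟩
    have hVle : V ≤ Submodule.span ℂ {f} := by
      intro v hv
      obtain ⟨c, hc⟩ := hT v (hlines v hv)
      rw [Submodule.mem_span_singleton]
      exact ⟨c, hc.symm⟩
    have h1 : Module.rank ℂ (Submodule.span ℂ ({f} : Set (MvPolynomial (Fin (n + 1)) ℂ))) ≤ 1 := by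
      refine (rank_span_le _).trans ?_
      simp
    have h2 : (2 : Cardinal) ≤ 1 := hrank.trans ((Submodule.rank_mono hVle).trans h1)
    norm_num at h2
  · intro hNo h hline
    obtain ⟨ε, hε, hline⟩ := hline
    by_cases hf0 : f = 0
    · subst hf0
      obtain ⟨A, hA⟩ := hline ((ε / 2 : ℝ) : ℂ) (by
        rw [Complex.norm_real, Real.norm_eq_abs, abs_of_pos (by linarith)]
        linarith)
      rw [substGL, map_zero, zero_add] at hA
      have ht : ((ε / 2 : ℝ) : ℂ) ≠ 0 := by
        simp only [ne_eq, Complex.ofReal_eq_zero]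
        linarith
      refine ⟨0, ?_⟩
      rw [smul_zero]
      exact (smul_eq_zero.mp hA).resolve_left ht
    by_cases hd : d = 0
    · subst hd
      -- f is a constant, fixed by every substitution
      have hCf : f = C (coeff 0 f) := by
        conv_lhs => rw [f.as_sum]
        have hsub : f.support ⊆ {0} := by
          intro m hm
          have hm0 : (∑ i ∈ m.support, m i) = 0 := by
            by_contra hne
            exact mem_support_iff.mp hm (hf.coeff_eq_zero hne)
          have : Finsupp.degree m = 0 := hm0
          rw [Finsupp.degree_eq_zero_iff] at this
          simp [this]
        rw [Finset.sum_subset hsub (fun m _ hm => by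
          rw [notMem_support_iff.mp hm, monomial_zero])]
        rw [Finset.sum_singleton, monomial_zero']
      obtain ⟨A, hA⟩ := hline ((ε / 2 : ℝ) : ℂ) (by
        rw [Complex.norm_real, Real.norm_eq_abs, abs_of_pos (by linarith)]
        linarith)
      rw [substGL] at hA
      conv_rhs at hA => rw [hCf]
      rw [aeval_C] at hA
      have : f + ((ε / 2 : ℝ) : ℂ) • h = f := by
        rw [hA, algebraMap_eq]
        exact hCf.symm
      have ht : ((ε / 2 : ℝ) : ℂ) ≠ 0 := by
        simp only [ne_eq, Complex.ofReal_eq_zero]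
        linarith
      have hh0 : h = 0 := by
        have := add_left_cancel (a := f) (by rw [this, add_zero] : f + ((ε / 2 : ℝ) : ℂ) • h = f + 0)
        exact (smul_eq_zero.mp this).resolve_left ht
      exact ⟨0, by rw [hh0, zero_smul]⟩
    · by_contra hnc
      push_neg at hnc
      apply hNo
      refine ⟨Submodule.span ℂ {h, f}, Submodule.subset_span (by simp), ?_, ?_⟩
      · -- rank ≥ 2
        have hli : LinearIndependent ℂ ![h, f] := by
          rw [linearIndependent_fin2]
          refine ⟨by simpa using hf0, fun a => ?_⟩
          simp only [Matrix.cons_val_one, Matrix.head_cons, Matrix.cons_val_zero]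
          exact fun hh => hnc a hh.symm
        have hr := rank_span hli
        have hrange : Set.range ![h, f] = ({h, f} : Set (MvPolynomial (Fin (n + 1)) ℂ)) := by
          rw [Matrix.range_cons, Matrix.range_cons, Matrix.range_empty, Set.union_empty]
          rfl
        rw [hrange] at hr
        have hhf : h ≠ f := by simpa using hnc 1
        have hmk : Cardinal.mk ({h, f} : Set (MvPolynomial (Fin (n + 1)) ℂ)) = 2 := by
          rw [Cardinal.mk_insert (by simp [hhf]), Cardinal.mk_singleton]
          norm_num
        rw [hr, hmk]
      · -- every line through f in the span stays in the orbit
        intro v hv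
        rw [Submodule.mem_span_pair] at hv
        obtain ⟨p, q, rfl⟩ := hv
        refine ⟨min (1 / (2 * (‖q‖ + 1))) (ε / (2 * (‖p‖ + 1))), ?_, ?_⟩
        · apply lt_min
          · positivity
          · positivity
        · intro t ht
          have hq1 : (0:ℝ) < ‖q‖ + 1 := by positivity
          have hp1 : (0:ℝ) < ‖p‖ + 1 := by positivity
          have ht1 : ‖t‖ < 1 / (2 * (‖q‖ + 1)) := lt_of_lt_of_le ht (min_le_left _ _)
          have ht2 : ‖t‖ < ε / (2 * (‖p‖ + 1)) := lt_of_lt_of_le ht (min_le_right _ _)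
          set c : ℂ := 1 + t * q with hc_def
          have htq : ‖t * q‖ < 1 / 2 := by
            rw [norm_mul]
            calc ‖t‖ * ‖q‖ ≤ ‖t‖ * (‖q‖ + 1) := by nlinarith [norm_nonneg t]
              _ < (1 / (2 * (‖q‖ + 1))) * (‖q‖ + 1) := by nlinarith [norm_nonneg t]
              _ = 1 / 2 := by field_simp
          have hcn : (1:ℝ) / 2 ≤ ‖c‖ := by
            have h1 : ‖(1:ℂ)‖ ≤ ‖c‖ + ‖t * q‖ := by
              calc ‖(1:ℂ)‖ = ‖c + (-(t * q))‖ := by rw [hc_def]; ring_nf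
                _ ≤ ‖c‖ + ‖-(t * q)‖ := norm_add_le _ _
                _ = ‖c‖ + ‖t * q‖ := by rw [norm_neg]
            rw [norm_one] at h1
            linarith
          have hc0 : c ≠ 0 := by
            intro h0
            rw [h0, norm_zero] at hcn
            linarith
          set s : ℂ := t * p / c with hs_def
          have hsn : ‖s‖ < ε := by
            rw [hs_def, norm_div, norm_mul]
            rw [div_lt_iff₀ (by linarith : (0:ℝ) < ‖c‖)]
            calc ‖t‖ * ‖p‖ ≤ ‖t‖ * (‖p‖ + 1) := by nlinarith [norm_nonneg t]
              _ < (ε / (2 * (‖p‖ + 1))) * (‖p‖ + 1) := by nlinarith [norm_nonneg t]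
              _ = ε / 2 := by field_simp
              _ ≤ ε * ‖c‖ := by nlinarith
          have key : f + t • (p • h + q • f) = c • (f + s • h) := by
            have hcs : c * s = t * p := by
              rw [hs_def, mul_div_cancel₀ _ hc0]
            have hL : f + t • (p • h + q • f) = f + (t * p) • h + (t * q) • f := by
              rw [smul_add, smul_smul, smul_smul, add_assoc]
            have hR : c • (f + s • h) = f + (t * p) • h + (t * q) • f := by
              rw [smul_add, smul_smul, hcs, hc_def, add_smul, one_smul]
              abel
            rw [hL, hR]
          obtain ⟨A, hA⟩ := hline s hsn
          obtain ⟨B, hB⟩ := projEquiv_smul n d hd hf hc0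
          refine ⟨B * A, ?_⟩
          rw [key, ← substGL_comp, ← hB, substGL_smul, ← hA]
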